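/- Let L be a local field of characteristic p with maximal ideal 𝔭_L, and let U_L^r = 1 + 𝔭_L^r for r > 0. Let Ū_L^r denote the image of U_L^r in Lˣ/(Lˣ)^p. Then Ū_L^{ip} = Ū_L^{ip+1} for every i > 0, and for every r > 0 with p ∤ r the quotient Ū_L^r / Ū_L^{r+1} is isomorphic to the additive group of the residue field l. -/

import Mathlib

/-- Coefficients of a product of Laurent series vanish below the sum of the
vanishing bounds of the factors. -/
theorem mulcoeff_aux {l : Type} [Field l] (x y : LaurentSeries l) (a b n : ℤ)
    (hx : ∀ m : ℤ, m < a → x.coeff m = 0) (hy : ∀ m : ℤ, m < b → y.coeff m = 0)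
    (hn : n < a + b) : (x * y).coeff n = 0 := by
  rw [HahnSeries.coeff_mul]
  apply Finset.sum_eq_zero
  rintro ⟨i, j⟩ hij
  rw [Finset.mem_addAntidiagonal] at hij
  obtain ⟨hi, hj, hijn⟩ := hij
  have hia : a ≤ i := not_lt.1 fun h => hi (hx i h)
  have hjb : b ≤ j := not_lt.1 fun h => hj (hy j h)
  exact absurd hn (not_lt.2 (hijn ▸ add_le_add hia hjb))

section Aux
variable {l : Type} [Field l]

instance lsCharP (p : ℕ) [CharP l p] : CharP (LaurentSeries l) p :=
  charP_of_injective_ringHom (f := HahnSeries.C) HahnSeries.C_injective p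

lemma frob_inj (p : ℕ) (hp : p.Prime) [CharP l p] :
    Function.Injective (fun x : l => x ^ p) := by
  haveI : Fact p.Prime := ⟨hp⟩
  intro x y hxy
  have h : (x - y) ^ p = x ^ p - y ^ p := sub_pow_char ..
  simp only [] at hxy
  rw [hxy, sub_self] at h
  exact sub_eq_zero.mp ((pow_eq_zero_iff hp.ne_zero).mp h)

lemma frob_surj (p : ℕ) (hp : p.Prime) [Fintype l] [CharP l p] (c : l) :
    ∃ d : l, d ^ p = c :=
  Finite.injective_iff_surjective.mp (frob_inj p hp) c

lemma low_coeff_pow (z : LaurentSeries l) (t : ℤ) (hz : ∀ m : ℤ, m < t → z.coeff m = 0)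
    (k : ℕ) : ∀ m : ℤ, m < (k : ℤ) * t → (z ^ k).coeff m = 0 := by
  induction k with
  | zero =>
    intro m hm
    rw [pow_zero, HahnSeries.coeff_one, if_neg (by push_cast at hm; omega)]
  | succ k ih =>
    intro m hm
    rw [pow_succ]
    exact mulcoeff_aux _ _ ((k : ℤ) * t) t m ih hz (by push_cast at hm ⊢; linarith)

end Aux

/-- The higher unit group `U_L^r = 1 + 𝔭_L^r` of `L = l((s))` (for `r ≥ 1`), as a
subgroup of `Lˣ`. -/
def Usub (l : Type) [Field l] (r : ℕ) (hr : 0 < r) : Subgroup (LaurentSeries l)ˣ where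
  carrier := {u | ∀ n : ℤ, n < (r : ℤ) → ((u : LaurentSeries l) - 1).coeff n = 0}
  one_mem' := by intro n hn; simp
  mul_mem' := by
    intro u v hu hv n hn
    have key : ((u * v : (LaurentSeries l)ˣ) : LaurentSeries l) - 1
        = (((u : LaurentSeries l) - 1) * ((v : LaurentSeries l) - 1))
          + (((u : LaurentSeries l) - 1) + ((v : LaurentSeries l) - 1)) := by
      rw [Units.val_mul]; ring
    rw [key, HahnSeries.coeff_add, HahnSeries.coeff_add,
      mulcoeff_aux _ _ (r : ℤ) (r : ℤ) n hu hv
        (lt_of_lt_of_le hn (by exact_mod_cast Nat.le_add_left r r)),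
      hu n hn, hv n hn]
    ring
  inv_mem' := by
    intro u hu n hn
    set w : LaurentSeries l := (u : LaurentSeries l) with hwdef
    set a : LaurentSeries l := ((u⁻¹ : (LaurentSeries l)ˣ) : LaurentSeries l) with hadef
    have hw0 : w ≠ 0 := Units.ne_zero u
    have ha0 : a ≠ 0 := Units.ne_zero _
    have haw : a * w = 1 := by rw [hwdef, hadef]; exact_mod_cast u.inv_mul
    have hwneg : ∀ m : ℤ, m < 0 → w.coeff m = 0 := by
      intro m hm
      have h : w = (w - 1) + 1 := by ring
      rw [h, HahnSeries.coeff_add, hu m (lt_of_lt_of_le hm (by exact_mod_cast Nat.zero_le r)),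
        HahnSeries.coeff_one, if_neg (by omega)]
      simp
    have hw00 : w.coeff 0 ≠ 0 := by
      have h : w = (w - 1) + 1 := by ring
      rw [h, HahnSeries.coeff_add, hu 0 (by exact_mod_cast hr), HahnSeries.coeff_one, if_pos rfl]
      simp
    have hordw : w.order = 0 := by
      apply le_antisymm
      · by_contra h
        exact hw00 (HahnSeries.coeff_eq_zero_of_lt_order (by omega))
      · by_contra h
        exact (mt HahnSeries.coeff_order_eq_zero.1 hw0) (hwneg w.order (by omega))
    have horda : a.order = 0 := by
      have h := HahnSeries.order_mul ha0 hw0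
      rw [haw, HahnSeries.order_one, hordw, add_zero] at h
      omega
    have haneg : ∀ m : ℤ, m < 0 → a.coeff m = 0 := fun m hm =>
      HahnSeries.coeff_eq_zero_of_lt_order (by rw [horda]; exact hm)
    have key : a - 1 = (-a) * (w - 1) := by
      linear_combination haw
    rw [key]
    exact mulcoeff_aux (-a) (w - 1) 0 (r : ℤ) n
      (fun m hm => by rw [HahnSeries.coeff_neg, haneg m hm, neg_zero]) hu
      (by omega)

instance powRangeNormal (p : ℕ) (l : Type) [Field l] :
    ((powMonoidHom p (α := (LaurentSeries l)ˣ)).range).Normal := by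
  constructor
  intro n hn g
  have h : g * n * g⁻¹ = n := by
    rw [mul_comm g n, mul_assoc]
    simp
  rw [h]
  exact hn

/-- The image `Ū_L^r` of `U_L^r` in `Lˣ/(Lˣ)^p`. -/
noncomputable def Ubar (p : ℕ) (l : Type) [Field l] (r : ℕ) (hr : 0 < r) :
    Subgroup ((LaurentSeries l)ˣ ⧸
      (powMonoidHom p (α := (LaurentSeries l)ˣ)).range) :=
  (Usub l r hr).map (QuotientGroup.mk' _)

section Key
variable {l : Type} [Field l]

lemma mem_usub {r : ℕ} {hr : 0 < r} {u : (LaurentSeries l)ˣ} :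
    u ∈ Usub l r hr ↔ ∀ n : ℤ, n < (r : ℤ) → ((u : LaurentSeries l) - 1).coeff n = 0 :=
  Iff.rfl

lemma usub_mono {r r' : ℕ} (h : r ≤ r') (hr : 0 < r) (hr' : 0 < r') :
    Usub l r' hr' ≤ Usub l r hr := fun u hu n hn =>
  hu n (lt_of_lt_of_le hn (by exact_mod_cast h))

lemma pow_p_mem_succ (p : ℕ) (hp : p.Prime) [CharP l p] {r : ℕ} (hr : 0 < r)
    (hpr : ¬ p ∣ r) (w : (LaurentSeries l)ˣ) (h : w ^ p ∈ Usub l r hr)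
    (hr1 : 0 < r + 1) : w ^ p ∈ Usub l (r + 1) hr1 := by
  haveI : Fact p.Prime := ⟨hp⟩
  set W : LaurentSeries l := (w : LaurentSeries l) with hWdef
  have hWval : ((w ^ p : (LaurentSeries l)ˣ) : LaurentSeries l) = W ^ p := rfl
  have h' : ∀ n : ℤ, n < (r : ℤ) → (W ^ p - 1).coeff n = 0 := fun n hn => by
    rw [← hWval]; exact h n hn
  have hW0 : W ≠ 0 := Units.ne_zero w
  have hneg : ∀ m : ℤ, m < 0 → (W ^ p).coeff m = 0 := by
    intro m hm
    have hx : W ^ p = (W ^ p - 1) + 1 := by ring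
    rw [hx, HahnSeries.coeff_add, h' m (lt_of_lt_of_le hm (by exact_mod_cast Nat.zero_le r)),
      HahnSeries.coeff_one, if_neg (by omega)]
    simp
  have h00 : (W ^ p).coeff 0 ≠ 0 := by
    have hx : W ^ p = (W ^ p - 1) + 1 := by ring
    rw [hx, HahnSeries.coeff_add, h' 0 (by exact_mod_cast hr), HahnSeries.coeff_one, if_pos rfl]
    simp
  have hWp0 : W ^ p ≠ 0 := pow_ne_zero p hW0
  have hordWp : (W ^ p).order = 0 := by
    apply le_antisymm
    · by_contra hlt
      exact h00 (HahnSeries.coeff_eq_zero_of_lt_order (by omega))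
    · by_contra hlt
      exact (mt HahnSeries.coeff_order_eq_zero.1 hWp0) (hneg _ (by omega))
  have hordW : W.order = 0 := by
    have h2 := HahnSeries.order_pow W p
    rw [hordWp, nsmul_eq_mul] at h2
    have hp0 : (p : ℤ) ≠ 0 := by exact_mod_cast hp.ne_zero
    exact (mul_eq_zero.mp h2.symm).resolve_left hp0
  set c : l := W.coeff 0 with hcdef
  have hc0 : c ≠ 0 := by
    have hx := (mt HahnSeries.coeff_order_eq_zero.1 hW0)
    rwa [hordW] at hx
  set z : LaurentSeries l := W - HahnSeries.C c with hzdef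
  have hzlow : ∀ m : ℤ, m < 1 → z.coeff m = 0 := by
    intro m hm
    rw [hzdef, HahnSeries.coeff_sub]
    rcases eq_or_lt_of_le (show m ≤ 0 by omega) with hm0 | hm0
    · rw [hm0, HahnSeries.C_apply, HahnSeries.coeff_single_same, sub_self]
    · rw [HahnSeries.coeff_eq_zero_of_lt_order (by rw [hordW]; exact hm0),
        HahnSeries.C_apply, HahnSeries.coeff_single_of_ne (by omega), sub_zero]
  have hWz : W = HahnSeries.C c + z := by rw [hzdef]; ring
  have hfrob : W ^ p = HahnSeries.C (c ^ p) + z ^ p := by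
    rw [hWz, add_pow_char, ← map_pow]
  have hz0 : (z ^ p).coeff 0 = 0 := by
    apply low_coeff_pow z 1 hzlow p 0
    have h5 : 0 < (p : ℤ) := by exact_mod_cast hp.pos
    omega
  have hcp : c ^ p = 1 := by
    have h6 := h' 0 (by exact_mod_cast hr)
    rw [hfrob, HahnSeries.coeff_sub, HahnSeries.coeff_add, hz0, HahnSeries.coeff_one,
      if_pos rfl] at h6
    have h7 : (HahnSeries.C (c ^ p) : LaurentSeries l).coeff 0 = c ^ p := by
      rw [HahnSeries.C_apply, HahnSeries.coeff_single_same]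
    rw [h7] at h6
    linear_combination h6
  have hc1 : c = 1 := frob_inj p hp (by simp [hcp])
  have hkey : W ^ p - 1 = z ^ p := by
    rw [hfrob, hc1, one_pow, map_one]; ring
  intro n hn
  rw [hWval, hkey]
  rcases eq_or_ne z 0 with hzz | hzz
  · rw [hzz, zero_pow hp.ne_zero, HahnSeries.coeff_zero]
  · have ht1 : 1 ≤ z.order := by
      by_contra hlt
      exact (mt HahnSeries.coeff_order_eq_zero.1 hzz) (hzlow _ (by omega))
    have hordzp : (z ^ p).order = (p : ℤ) * z.order := by
      rw [HahnSeries.order_pow, nsmul_eq_mul]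
    have hcoef : (z ^ p).coeff ((p : ℤ) * z.order) ≠ 0 := by
      have hx := (mt HahnSeries.coeff_order_eq_zero.1 (pow_ne_zero p hzz))
      rwa [hordzp] at hx
    have hge : (r : ℤ) ≤ (p : ℤ) * z.order := by
      by_contra hlt
      exact hcoef (by rw [← hkey]; exact h' _ (by omega))
    have hne : (r : ℤ) ≠ (p : ℤ) * z.order := by
      intro heq
      apply hpr
      obtain ⟨t, ht⟩ : ∃ t : ℕ, z.order = (t : ℤ) :=
        ⟨z.order.toNat, (Int.toNat_of_nonneg (by omega)).symm⟩
      refine ⟨t, ?_⟩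
      have : (r : ℤ) = ((p * t : ℕ) : ℤ) := by push_cast; rw [heq, ht]
      exact_mod_cast this
    have hgt : (r : ℤ) < (p : ℤ) * z.order := lt_of_le_of_ne hge hne
    apply HahnSeries.coeff_eq_zero_of_lt_order
    rw [hordzp]
    push_cast at hn
    linarith

end Key

section Part2Defs
variable {l : Type} [Field l]

/-- The coefficient map `U_L^r → l`, `u ↦ (u-1)_r`, as a group hom to `Multiplicative l`. -/
noncomputable def psi (l : Type) [Field l] (r : ℕ) (hr : 0 < r) :
    ↥(Usub l r hr) →* Multiplicative l :=
  MonoidHom.mk'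
    (fun u => Multiplicative.ofAdd
      ((((u : (LaurentSeries l)ˣ) : LaurentSeries l) - 1).coeff ((r : ℕ) : ℤ)))
    (by
      intro u v
      rw [← ofAdd_add]
      congr 1
      have hu : ∀ m : ℤ, m < ((r : ℕ) : ℤ) →
          (((u : (LaurentSeries l)ˣ) : LaurentSeries l) - 1).coeff m = 0 := u.2
      have hv : ∀ m : ℤ, m < ((r : ℕ) : ℤ) →
          (((v : (LaurentSeries l)ˣ) : LaurentSeries l) - 1).coeff m = 0 := v.2
      have key : (((u * v : ↥(Usub l r hr)) : (LaurentSeries l)ˣ) : LaurentSeries l) - 1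
          = ((((u : (LaurentSeries l)ˣ) : LaurentSeries l) - 1)
              * (((v : (LaurentSeries l)ˣ) : LaurentSeries l) - 1))
            + ((((u : (LaurentSeries l)ˣ) : LaurentSeries l) - 1)
              + (((v : (LaurentSeries l)ˣ) : LaurentSeries l) - 1)) := by
        push_cast
        ring
      rw [key, HahnSeries.coeff_add, HahnSeries.coeff_add,
        mulcoeff_aux _ _ ((r : ℕ) : ℤ) ((r : ℕ) : ℤ) _ hu hv
          (by omega)]
      ring)

/-- The map `U_L^r → Ū_L^r`. -/
noncomputable def sigma (p : ℕ) (l : Type) [Field l] (r : ℕ) (hr : 0 < r) :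
    ↥(Usub l r hr) →* ↥(Ubar p l r hr) :=
  MonoidHom.codRestrict
    ((QuotientGroup.mk' ((powMonoidHom p (α := (LaurentSeries l)ˣ)).range)).comp
      (Usub l r hr).subtype)
    (Ubar p l r hr)
    (fun k => Subgroup.mem_map.mpr ⟨(k : (LaurentSeries l)ˣ), k.2, rfl⟩)

lemma sigma_val (p : ℕ) (r : ℕ) (hr : 0 < r) (k : ↥(Usub l r hr)) :
    ((sigma p l r hr k : ↥(Ubar p l r hr)) : (LaurentSeries l)ˣ ⧸
        (powMonoidHom p (α := (LaurentSeries l)ˣ)).range)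
      = QuotientGroup.mk' _ (k : (LaurentSeries l)ˣ) := rfl

lemma sigma_surj (p : ℕ) (r : ℕ) (hr : 0 < r) :
    Function.Surjective (sigma p l r hr) := by
  rintro ⟨x, hx⟩
  obtain ⟨k, hk, hmk⟩ := Subgroup.mem_map.mp hx
  exact ⟨⟨k, hk⟩, Subtype.ext hmk⟩

lemma sigma_ker_le_psi_ker (p : ℕ) (hp : p.Prime) [CharP l p] (r : ℕ) (h1 : 0 < r)
    (hpr : ¬ p ∣ r) (h2 : 0 < r + 1) :
    (sigma p l r h1).ker ≤ (psi l r h1).ker := by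
  intro k hk
  rw [MonoidHom.mem_ker] at hk ⊢
  have hk' : QuotientGroup.mk' ((powMonoidHom p (α := (LaurentSeries l)ˣ)).range)
      (k : (LaurentSeries l)ˣ) = 1 := by
    have h3 := congrArg Subtype.val hk
    rw [← sigma_val p r h1 k]
    exact h3
  rw [QuotientGroup.mk'_apply, QuotientGroup.eq_one_iff] at hk'
  obtain ⟨w, hw⟩ := hk'
  have hw' : w ^ p = (k : (LaurentSeries l)ˣ) := hw
  have hwp : w ^ p ∈ Usub l r h1 := by rw [hw']; exact k.2
  have hmem := pow_p_mem_succ p hp h1 hpr w hwp h2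
  have hc : (((k : (LaurentSeries l)ˣ) : LaurentSeries l) - 1).coeff ((r : ℕ) : ℤ) = 0 := by
    have h4 := hmem ((r : ℕ) : ℤ) (by push_cast; omega)
    rwa [hw'] at h4
  show Multiplicative.ofAdd
    ((((k : (LaurentSeries l)ˣ) : LaurentSeries l) - 1).coeff ((r : ℕ) : ℤ)) = 1
  rw [hc]
  rfl

end Part2Defs

/-- In `L = l((s))` of characteristic `p`: `Ū_L^{ip} = Ū_L^{ip+1}` for all `i > 0`,
and for `r > 0` with `p ∤ r` the quotient `Ū_L^r/Ū_L^{r+1}` is isomorphic to the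
additive group of the residue field `l` (expressed as: there is a surjective
homomorphism `Ū_L^r → l` with kernel exactly `Ū_L^{r+1}`). -/
theorem stmt_19 (p : ℕ) (hp : p.Prime) (l : Type) [Field l] [Fintype l] [CharP l p] :
    (∀ i : ℕ, 0 < i → ∀ (h1 : 0 < i * p) (h2 : 0 < i * p + 1),
      Ubar p l (i * p) h1 = Ubar p l (i * p + 1) h2) ∧
    (∀ r : ℕ, 0 < r → ¬ p ∣ r → ∀ (h1 : 0 < r) (h2 : 0 < r + 1),
      ∃ φ : ↥(Ubar p l r h1) →* Multiplicative l, Function.Surjective φ ∧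
        ∀ u : ↥(Ubar p l r h1), φ u = 1 ↔
          (u : (LaurentSeries l)ˣ ⧸
            (powMonoidHom p (α := (LaurentSeries l)ˣ)).range)
            ∈ Ubar p l (r + 1) h2) := by
  haveI : Fact p.Prime := ⟨hp⟩
  constructor
  · -- Part 1 : Ū^{ip} = Ū^{ip+1}
    intro i hi h1 h2
    apply le_antisymm
    · rintro x hx
      obtain ⟨u, hu, rfl⟩ := Subgroup.mem_map.mp hx
      have hu' : ∀ m : ℤ, m < ((i * p : ℕ) : ℤ) →
          ((u : LaurentSeries l) - 1).coeff m = 0 := hu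
      obtain ⟨d, hd⟩ := frob_surj p hp (((u : LaurentSeries l) - 1).coeff ((i * p : ℕ) : ℤ))
      have hip : (0 : ℤ) < ((i * p : ℕ) : ℤ) := by exact_mod_cast h1
      have hii : (0 : ℤ) < ((i : ℕ) : ℤ) := by exact_mod_cast hi
      have hv00 : (1 + HahnSeries.single ((i : ℕ) : ℤ) d : LaurentSeries l) ≠ 0 := by
        intro hzero
        have hx1 : (1 + HahnSeries.single ((i : ℕ) : ℤ) d : LaurentSeries l).coeff 0 = 1 := by
          rw [HahnSeries.coeff_add, HahnSeries.coeff_one, if_pos rfl,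
            HahnSeries.coeff_single_of_ne (by omega)]
          simp
        rw [hzero, HahnSeries.coeff_zero] at hx1
        exact one_ne_zero hx1.symm
      set v : (LaurentSeries l)ˣ :=
        Units.mk0 (1 + HahnSeries.single ((i : ℕ) : ℤ) d) hv00 with hvdef
      have hvpval : ((v ^ p : (LaurentSeries l)ˣ) : LaurentSeries l)
          = 1 + HahnSeries.single ((i * p : ℕ) : ℤ) (d ^ p) := by
        have h3 : ((v ^ p : (LaurentSeries l)ˣ) : LaurentSeries l)
            = (1 + HahnSeries.single ((i : ℕ) : ℤ) d) ^ p := rfl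
        rw [h3, add_pow_char, one_pow, HahnSeries.single_pow, nsmul_eq_mul]
        congr 2
        push_cast
        ring
      have hvp_mem : v ^ p ∈ Usub l (i * p) h1 := by
        intro n hn
        rw [hvpval, add_sub_cancel_left]
        exact HahnSeries.coeff_single_of_ne (by omega)
      have hinv_mem : (v ^ p)⁻¹ ∈ Usub l (i * p) h1 := (Usub l (i * p) h1).inv_mem hvp_mem
      have hinv' : ∀ m : ℤ, m < ((i * p : ℕ) : ℤ) →
          ((((v ^ p)⁻¹ : (LaurentSeries l)ˣ) : LaurentSeries l) - 1).coeff m = 0 := hinv_mem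
      have hu'mem : u * (v ^ p)⁻¹ ∈ Usub l (i * p + 1) h2 := by
        intro n hn
        have hvv : ((v ^ p : (LaurentSeries l)ˣ) : LaurentSeries l)
            * (((v ^ p)⁻¹ : (LaurentSeries l)ˣ) : LaurentSeries l) = 1 := by
          exact_mod_cast Units.mul_inv (v ^ p)
        have hiden : ((u * (v ^ p)⁻¹ : (LaurentSeries l)ˣ) : LaurentSeries l) - 1
            = (((u : (LaurentSeries l)ˣ) : LaurentSeries l)
                - ((v ^ p : (LaurentSeries l)ˣ) : LaurentSeries l))
              * (((v ^ p)⁻¹ : (LaurentSeries l)ˣ) : LaurentSeries l) := by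
          rw [Units.val_mul]
          linear_combination hvv
        rw [hiden]
        have hn' : n < ((i * p : ℕ) : ℤ) + 1 := by push_cast at hn ⊢; omega
        apply mulcoeff_aux _ _ (((i * p : ℕ) : ℤ) + 1) 0 n ?_ ?_ (by omega)
        · intro m hm
          have hsub : ((u : (LaurentSeries l)ˣ) : LaurentSeries l)
              - ((v ^ p : (LaurentSeries l)ˣ) : LaurentSeries l)
              = (((u : (LaurentSeries l)ˣ) : LaurentSeries l) - 1)
                - HahnSeries.single ((i * p : ℕ) : ℤ) (d ^ p) := by
            rw [hvpval]; ring
          rw [hsub, HahnSeries.coeff_sub]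
          rcases eq_or_ne m ((i * p : ℕ) : ℤ) with rfl | hm'
          · rw [HahnSeries.coeff_single_same, hd, sub_self]
          · rw [hu' m (by omega), HahnSeries.coeff_single_of_ne hm', sub_zero]
        · intro m hm
          have hx2 : (((v ^ p)⁻¹ : (LaurentSeries l)ˣ) : LaurentSeries l)
              = ((((v ^ p)⁻¹ : (LaurentSeries l)ˣ) : LaurentSeries l) - 1) + 1 := by ring
          rw [hx2, HahnSeries.coeff_add, hinv' m (by omega), HahnSeries.coeff_one,
            if_neg (by omega)]
          simp
      refine Subgroup.mem_map.mpr ⟨u * (v ^ p)⁻¹, hu'mem, ?_⟩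
      rw [QuotientGroup.mk'_eq_mk']
      exact ⟨v ^ p, ⟨v, rfl⟩, by group⟩
    · exact Subgroup.map_mono (usub_mono (Nat.le_succ _) h1 h2)
  · -- Part 2 : Ū^r / Ū^{r+1} ≃ l for p ∤ r
    intro r hr hpr h1 h2
    have hσsurj := sigma_surj (l := l) p r h1
    have hker := sigma_ker_le_psi_ker (l := l) p hp r h1 hpr h2
    set φ : ↥(Ubar p l r h1) →* Multiplicative l :=
      ((sigma p l r h1).liftOfSurjective hσsurj) ⟨psi l r h1, hker⟩ with hφdef
    have hφσ : ∀ k, φ (sigma p l r h1 k) = psi l r h1 k := fun k =>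
      MonoidHom.liftOfRightInverse_comp_apply _ _ _ ⟨psi l r h1, hker⟩ k
    have hψsurj : Function.Surjective (psi l r h1) := by
      intro y
      have hrpos : (0 : ℤ) < ((r : ℕ) : ℤ) := by exact_mod_cast h1
      have hx00 : (1 + HahnSeries.single ((r : ℕ) : ℤ) (Multiplicative.toAdd y) :
          LaurentSeries l) ≠ 0 := by
        intro hzero
        have hx1 : (1 + HahnSeries.single ((r : ℕ) : ℤ) (Multiplicative.toAdd y) :
            LaurentSeries l).coeff 0 = 1 := by
          rw [HahnSeries.coeff_add, HahnSeries.coeff_one, if_pos rfl,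
            HahnSeries.coeff_single_of_ne (by omega)]
          simp
        rw [hzero, HahnSeries.coeff_zero] at hx1
        exact one_ne_zero hx1.symm
      have hxmem : Units.mk0 _ hx00 ∈ Usub l r h1 := by
        intro n hn
        show ((1 + HahnSeries.single ((r : ℕ) : ℤ) (Multiplicative.toAdd y) :
          LaurentSeries l) - 1).coeff n = 0
        rw [add_sub_cancel_left]
        exact HahnSeries.coeff_single_of_ne (by omega)
      refine ⟨⟨Units.mk0 _ hx00, hxmem⟩, ?_⟩
      show Multiplicative.ofAdd (((1 + HahnSeries.single ((r : ℕ) : ℤ)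
        (Multiplicative.toAdd y) : LaurentSeries l) - 1).coeff ((r : ℕ) : ℤ)) = y
      rw [add_sub_cancel_left, HahnSeries.coeff_single_same]
      exact ofAdd_toAdd y
    refine ⟨φ, ?_, ?_⟩
    · intro y
      obtain ⟨k, hk⟩ := hψsurj y
      exact ⟨sigma p l r h1 k, by rw [hφσ k, hk]⟩
    · intro u
      obtain ⟨k, hk⟩ := hσsurj u
      have huval : (u : (LaurentSeries l)ˣ ⧸
            (powMonoidHom p (α := (LaurentSeries l)ˣ)).range)
          = QuotientGroup.mk' _ (k : (LaurentSeries l)ˣ) := by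
        rw [← hk]
        rfl
      constructor
      · intro hone
        have hψk : psi l r h1 k = 1 := by rw [← hφσ k, hk]; exact hone
        have hψk' : Multiplicative.ofAdd
            ((((k : (LaurentSeries l)ˣ) : LaurentSeries l) - 1).coeff ((r : ℕ) : ℤ)) = 1 := hψk
        have hc : (((k : (LaurentSeries l)ˣ) : LaurentSeries l) - 1).coeff ((r : ℕ) : ℤ) = 0 :=
          ofAdd_eq_one.mp hψk'
        have hk2 : ∀ n : ℤ, n < ((r : ℕ) : ℤ) →
            (((k : (LaurentSeries l)ˣ) : LaurentSeries l) - 1).coeff n = 0 := k.2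
        have hkmem : (k : (LaurentSeries l)ˣ) ∈ Usub l (r + 1) h2 := by
          intro n hn
          have hn' : n < ((r : ℕ) : ℤ) + 1 := by push_cast at hn ⊢; omega
          rcases eq_or_ne n ((r : ℕ) : ℤ) with rfl | hne
          · exact hc
          · exact hk2 n (by omega)
        exact Subgroup.mem_map.mpr ⟨(k : (LaurentSeries l)ˣ), hkmem, huval.symm⟩
      · intro hmem
        obtain ⟨v, hv, hmkv⟩ := Subgroup.mem_map.mp hmem
        have heq : QuotientGroup.mk' ((powMonoidHom p (α := (LaurentSeries l)ˣ)).range) v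
            = QuotientGroup.mk' _ (k : (LaurentSeries l)ˣ) := by
          rw [hmkv, huval]
        rw [QuotientGroup.mk'_eq_mk'] at heq
        obtain ⟨z, hzN, hzk⟩ := heq
        obtain ⟨w, rfl⟩ := hzN
        have hzk' : v * w ^ p = (k : (LaurentSeries l)ˣ) := hzk
        have hwp_r : w ^ p ∈ Usub l r h1 := by
          have hzval : w ^ p = v⁻¹ * (k : (LaurentSeries l)ˣ) := by
            rw [← hzk']
            group
          rw [hzval]
          exact mul_mem ((Usub l r h1).inv_mem (usub_mono (Nat.le_succ r) h1 h2 hv)) k.2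
        have hwp_r1 := pow_p_mem_succ p hp h1 hpr w hwp_r h2
        have hkmem : (k : (LaurentSeries l)ˣ) ∈ Usub l (r + 1) h2 := by
          rw [← hzk']
          exact mul_mem hv hwp_r1
        rw [← hk, hφσ k]
        show Multiplicative.ofAdd
          ((((k : (LaurentSeries l)ˣ) : LaurentSeries l) - 1).coeff ((r : ℕ) : ℤ)) = 1
        rw [hkmem ((r : ℕ) : ℤ) (by push_cast; omega)]
        rfl
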